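/- Let m ≥ 2 be an integer, q a positive integer, and B ≥ 1. Then ∑_{v ≤ B^{1/(m+r)}, v squarefree} gcd(v^{km+kr}, q)^{1/(km)} / v^{(m+r)/m} ≪ q^ε for every ε > 0 and every 1 ≤ r ≤ m−1, where the implicit constant depends on ε, m, k, r but not on q or B. -/

import Mathlib

lemma divisor_bound (ε : ℝ) (hε : 0 < ε) :
    ∃ C : ℝ, 1 ≤ C ∧ ∀ q : ℕ, 1 ≤ q → (q.divisors.card : ℝ) ≤ C * (q : ℝ) ^ ε := by
  have hlog2 : 0 < Real.log 2 := Real.log_pos (by norm_num)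
  set t : ℝ := ε * Real.log 2 with ht_def
  have ht : 0 < t := mul_pos hε hlog2
  set A : ℝ := 2 / t + 1 with hA_def
  have hA : 1 ≤ A := le_add_of_nonneg_left (by positivity)
  -- key exponential bound
  have key' : ∀ e : ℕ, t * ((e : ℝ) + 1) ≤ (2 + t) * Real.exp ((e : ℝ) * t) := by
    intro e
    have h0 : (0 : ℝ) ≤ (e : ℝ) := Nat.cast_nonneg e
    have hx := Real.add_one_le_exp ((e : ℝ) * t / 2)
    have hm : Real.exp ((e : ℝ) * t / 2) ≤ Real.exp ((e : ℝ) * t) :=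
      Real.exp_le_exp.2 (by nlinarith)
    have h1 : (1 : ℝ) ≤ Real.exp ((e : ℝ) * t) := Real.one_le_exp (by positivity)
    nlinarith
  have h2exp : ∀ e : ℕ, (2 : ℝ) ^ ((e : ℝ) * ε) = Real.exp ((e : ℝ) * t) := by
    intro e
    rw [Real.rpow_def_of_pos (by norm_num : (0:ℝ) < 2)]
    ring_nf
    congr 1
    rw [ht_def]
    ring
  have key : ∀ e : ℕ, ((e : ℝ) + 1) ≤ A * (2 : ℝ) ^ ((e : ℝ) * ε) := by
    intro e
    rw [h2exp e]
    have hAeq : A = (2 + t) / t := by rw [hA_def, div_add_one ht.ne']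
    rw [hAeq, div_mul_eq_mul_div, le_div_iff₀ ht]
    have := key' e
    linarith [key' e]
  -- per-prime bound
  have hsmall_bound : ∀ p e : ℕ, 2 ≤ p →
      ((e : ℝ) + 1) ≤ (if (p : ℝ) < (2:ℝ) ^ (1/ε) then A else 1) * (p : ℝ) ^ ((e : ℝ) * ε) := by
    intro p e hp
    have hp0 : (0 : ℝ) ≤ (p : ℝ) := Nat.cast_nonneg p
    have hp2 : (2 : ℝ) ≤ (p : ℝ) := by exact_mod_cast hp
    have hee : 0 ≤ (e : ℝ) * ε := by positivity
    by_cases hcase : (p : ℝ) < (2:ℝ) ^ (1/ε)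
    · rw [if_pos hcase]
      refine (key e).trans ?_
      have h2p : (2:ℝ) ^ ((e:ℝ)*ε) ≤ (p:ℝ) ^ ((e:ℝ)*ε) :=
        Real.rpow_le_rpow (by norm_num) hp2 hee
      exact mul_le_mul_of_nonneg_left h2p (by linarith)
    · rw [if_neg hcase, one_mul]
      -- p ^ ε ≥ 2
      have hpε : (2 : ℝ) ≤ (p : ℝ) ^ ε := by
        have := Real.rpow_le_rpow (by positivity) (not_lt.1 hcase) hε.le
        rwa [← Real.rpow_mul (by norm_num : (0:ℝ) ≤ 2), one_div,
          inv_mul_cancel₀ hε.ne', Real.rpow_one] at this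
      have h1 : ((e : ℝ) + 1) ≤ (2 : ℝ) ^ e := by
        have := @Nat.lt_two_pow_self e
        exact_mod_cast Nat.succ_le_of_lt this
      calc ((e : ℝ) + 1) ≤ (2 : ℝ) ^ e := h1
        _ ≤ ((p : ℝ) ^ ε) ^ e := by
            exact pow_le_pow_left₀ (by norm_num) hpε e
        _ = (p : ℝ) ^ ((e : ℝ) * ε) := by
            rw [← Real.rpow_natCast ((p:ℝ)^ε) e, ← Real.rpow_mul hp0, mul_comm]
  set X : ℕ := ⌈(2:ℝ) ^ (1/ε)⌉₊ with hX_def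
  refine ⟨A ^ X, one_le_pow₀ hA, ?_⟩
  intro q hq
  have hq0 : q ≠ 0 := by omega
  have hA0 : (0:ℝ) ≤ A := by linarith
  have hcard : (q.divisors.card : ℝ)
      = ∏ p ∈ q.primeFactors, ((q.factorization p : ℝ) + 1) := by
    rw [Nat.card_divisors hq0]
    push_cast
    rfl
  have hqe : (q : ℝ) ^ ε
      = ∏ p ∈ q.primeFactors, (p : ℝ) ^ ((q.factorization p : ℝ) * ε) := by
    conv_lhs => rw [← Nat.factorization_prod_pow_eq_self hq0]
    have h1 : ((q.factorization.prod fun p k => p ^ k : ℕ) : ℝ)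
        = ∏ p ∈ q.primeFactors, ((p : ℝ) ^ (q.factorization p : ℕ)) := by
      rw [Finsupp.prod, ← Nat.support_factorization]
      push_cast
      rfl
    rw [h1, ← Real.finset_prod_rpow _ _ (fun p _ => by positivity) ε]
    refine Finset.prod_congr rfl fun p _ => ?_
    rw [← Real.rpow_natCast (p:ℝ) (q.factorization p),
      ← Real.rpow_mul (Nat.cast_nonneg p)]
  set c : ℕ → ℝ := fun p => if (p : ℝ) < (2:ℝ) ^ (1/ε) then A else 1 with hc_def
  have step1 : (q.divisors.card : ℝ)
      ≤ ∏ p ∈ q.primeFactors, (c p * (p : ℝ) ^ ((q.factorization p : ℝ) * ε)) := by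
    rw [hcard]
    refine Finset.prod_le_prod (fun p _ => by positivity) (fun p hp => ?_)
    exact hsmall_bound p (q.factorization p) (Nat.Prime.two_le (Nat.prime_of_mem_primeFactors hp))
  have step2 : ∏ p ∈ q.primeFactors, c p ≤ A ^ X := by
    classical
    rw [← Finset.prod_filter_mul_prod_filter_not q.primeFactors
      (fun p : ℕ => (p : ℝ) < (2:ℝ) ^ (1/ε)) c]
    have h1 : ∏ p ∈ q.primeFactors.filter (fun p : ℕ => (p:ℝ) < (2:ℝ)^(1/ε)), c p
        = A ^ (q.primeFactors.filter (fun p : ℕ => (p:ℝ) < (2:ℝ)^(1/ε))).card := by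
      rw [Finset.prod_congr rfl (fun p hp => ?_), Finset.prod_const]
      simp only [hc_def]
      exact if_pos (Finset.mem_filter.1 hp).2
    have h2 : ∏ p ∈ q.primeFactors.filter (fun p : ℕ => ¬ (p:ℝ) < (2:ℝ)^(1/ε)), c p = 1 := by
      refine Finset.prod_eq_one fun p hp => ?_
      simp only [hc_def]
      exact if_neg (Finset.mem_filter.1 hp).2
    rw [h1, h2, mul_one]
    refine pow_le_pow_right₀ hA ?_
    have hsub : (q.primeFactors.filter (fun p : ℕ => (p:ℝ) < (2:ℝ)^(1/ε)))
        ⊆ Finset.range X := by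
      intro p hp
      exact Finset.mem_range.2 (Nat.lt_ceil.2 (Finset.mem_filter.1 hp).2)
    exact le_of_le_of_eq (Finset.card_le_card hsub) (Finset.card_range X)
  calc (q.divisors.card : ℝ)
      ≤ ∏ p ∈ q.primeFactors, (c p * (p : ℝ) ^ ((q.factorization p : ℝ) * ε)) := step1
    _ = (∏ p ∈ q.primeFactors, c p)
        * ∏ p ∈ q.primeFactors, (p : ℝ) ^ ((q.factorization p : ℝ) * ε) :=
        Finset.prod_mul_distrib
    _ ≤ A ^ X * ∏ p ∈ q.primeFactors, (p : ℝ) ^ ((q.factorization p : ℝ) * ε) := by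
        refine mul_le_mul_of_nonneg_right step2 ?_
        exact Finset.prod_nonneg fun p _ => by positivity
    _ = A ^ X * (q : ℝ) ^ ε := by rw [hqe]


/-- For `m ≥ 2`, `k ≥ 1` and `1 ≤ r ≤ m − 1`: for every `ε > 0` there is a constant `C`
such that for all `q ≥ 1` and `B ≥ 1`, the sum over squarefree `v ≤ B^{1/(m+r)}` of
`gcd(v^{km+kr}, q)^{1/(km)} / v^{(m+r)/m}` is at most `C·q^ε`. -/
theorem gcd_sum_bound (m k r : ℕ) (hm : 2 ≤ m) (hk : 1 ≤ k) (hr : 1 ≤ r) (hr' : r ≤ m - 1) :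
    ∀ ε : ℝ, 0 < ε → ∃ C : ℝ, 0 < C ∧ ∀ q : ℕ, 1 ≤ q → ∀ B : ℝ, 1 ≤ B →
      ∀ S : Finset ℕ, (∀ v ∈ S, Squarefree v ∧ (v : ℝ) ≤ B ^ ((1 : ℝ) / (m + r))) →
      ∑ v ∈ S, (Nat.gcd (v ^ (k * m + k * r)) q : ℝ) ^ ((1 : ℝ) / (k * m))
          / (v : ℝ) ^ (((m : ℝ) + r) / m)
        ≤ C * (q : ℝ) ^ ε := by
  intro ε hε
  obtain ⟨C₀, hC₀, hdiv⟩ := divisor_bound ε hε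
  have hm0 : (0:ℝ) < m := by exact_mod_cast (by omega : 0 < m)
  have hr0 : (0:ℝ) < r := by exact_mod_cast (by omega : 0 < r)
  have hk0 : (0:ℝ) < k := by exact_mod_cast (by omega : 0 < k)
  set s : ℝ := ((m:ℝ) + r) / m with hs_def
  have hs1 : 1 < s := by
    rw [hs_def, lt_div_iff₀ hm0]
    linarith
  have hsum : Summable (fun n : ℕ => (n:ℝ) ^ (-s)) :=
    Real.summable_nat_rpow.2 (by linarith)
  set Z : ℝ := ∑' n : ℕ, (n:ℝ) ^ (-s) with hZ_def
  have hZ0 : 0 ≤ Z := tsum_nonneg fun n => Real.rpow_nonneg (Nat.cast_nonneg n) _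
  refine ⟨C₀ * (Z + 1), by positivity, ?_⟩
  intro q hq B hB S hS
  have hq0 : 0 < q := hq
  -- pointwise bound
  have key : ∀ v ∈ S, (Nat.gcd (v ^ (k * m + k * r)) q : ℝ) ^ ((1 : ℝ) / (k * m))
      / (v : ℝ) ^ s ≤ (Nat.gcd v q : ℝ) ^ s / (v : ℝ) ^ s := by
    intro v hv
    have hv0 : 0 < v := Nat.pos_of_ne_zero (hS v hv).1.ne_zero
    have hg0 : 0 < Nat.gcd v q := Nat.gcd_pos_of_pos_right v hq0
    have hdvd : Nat.gcd (v ^ (k * m + k * r)) q ∣ Nat.gcd v q ^ (k * m + k * r) :=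
      gcd_pow_left_dvd_pow_gcd
    have hle : Nat.gcd (v ^ (k * m + k * r)) q ≤ Nat.gcd v q ^ (k * m + k * r) :=
      Nat.le_of_dvd (pow_pos hg0 _) hdvd
    have hexp : ((k * m + k * r : ℕ) : ℝ) * ((1:ℝ) / (k * m)) = s := by
      rw [hs_def]
      push_cast
      field_simp
    have h1 : (Nat.gcd (v ^ (k * m + k * r)) q : ℝ) ^ ((1 : ℝ) / (k * m))
        ≤ (Nat.gcd v q : ℝ) ^ s := by
      calc (Nat.gcd (v ^ (k * m + k * r)) q : ℝ) ^ ((1 : ℝ) / (k * m))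
          ≤ ((Nat.gcd v q ^ (k * m + k * r) : ℕ) : ℝ) ^ ((1 : ℝ) / (k * m)) := by
            refine Real.rpow_le_rpow (Nat.cast_nonneg _) (by exact_mod_cast hle) ?_
            positivity
        _ = (Nat.gcd v q : ℝ) ^ s := by
            push_cast
            rw [← Real.rpow_natCast ((Nat.gcd v q : ℝ)) (k * m + k * r),
              ← Real.rpow_mul (Nat.cast_nonneg _)]
            rw [← hexp]
    have hvs : (0:ℝ) < (v:ℝ) ^ s := Real.rpow_pos_of_pos (by exact_mod_cast hv0) _
    exact (div_le_div_iff_of_pos_right hvs).2 h1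
  -- partition by gcd
  have hmaps : ∀ v ∈ S, Nat.gcd v q ∈ q.divisors := fun v hv =>
    Nat.mem_divisors.2 ⟨Nat.gcd_dvd_right v q, by omega⟩
  have inner : ∀ d ∈ q.divisors,
      ∑ v ∈ S.filter (fun v => Nat.gcd v q = d), (Nat.gcd v q : ℝ) ^ s / (v : ℝ) ^ s ≤ Z := by
    intro d hd
    have hd0 : 0 < d := Nat.pos_of_mem_divisors hd
    set T := S.filter (fun v => Nat.gcd v q = d) with hT_def
    have hTv : ∀ v ∈ T, (Nat.gcd v q : ℝ) ^ s / (v : ℝ) ^ s = ((v / d : ℕ) : ℝ) ^ (-s) := by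
      intro v hv
      obtain ⟨hvS, hvg⟩ := Finset.mem_filter.1 hv
      have hv0 : 0 < v := Nat.pos_of_ne_zero (hS v hvS).1.ne_zero
      have hdvd : d ∣ v := hvg ▸ Nat.gcd_dvd_left v q
      have hw : v = d * (v / d) := (Nat.mul_div_cancel' hdvd).symm
      have hw0 : 0 < v / d := Nat.div_pos (Nat.le_of_dvd hv0 hdvd) hd0
      have hd0' : (0:ℝ) < (d:ℝ) := by exact_mod_cast hd0
      have hw0' : (0:ℝ) < ((v / d : ℕ):ℝ) := by exact_mod_cast hw0
      rw [hvg]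
      rw [show ((v:ℕ):ℝ) = (d:ℝ) * ((v / d : ℕ):ℝ) by exact_mod_cast congrArg (Nat.cast : ℕ → ℝ) hw]
      rw [Real.mul_rpow hd0'.le hw0'.le, Real.rpow_neg hw0'.le]
      rw [div_mul_eq_div_div, div_self (by positivity)]
      rw [one_div]
    rw [Finset.sum_congr rfl hTv]
    have hinj : ∀ x ∈ T, ∀ y ∈ T, x / d = y / d → x = y := by
      intro x hx y hy hxy
      have hdx : d ∣ x := (Finset.mem_filter.1 hx).2 ▸ Nat.gcd_dvd_left x q
      have hdy : d ∣ y := (Finset.mem_filter.1 hy).2 ▸ Nat.gcd_dvd_left y q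
      rw [← Nat.mul_div_cancel' hdx, ← Nat.mul_div_cancel' hdy, hxy]
    rw [← Finset.sum_image (g := fun v : ℕ => v / d) (f := fun w : ℕ => (w:ℝ) ^ (-s)) hinj]
    exact Summable.sum_le_tsum _ (fun n _ => Real.rpow_nonneg (Nat.cast_nonneg n) _) hsum
  calc ∑ v ∈ S, (Nat.gcd (v ^ (k * m + k * r)) q : ℝ) ^ ((1 : ℝ) / (k * m))
          / (v : ℝ) ^ s
      ≤ ∑ v ∈ S, (Nat.gcd v q : ℝ) ^ s / (v : ℝ) ^ s := Finset.sum_le_sum key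
    _ = ∑ d ∈ q.divisors, ∑ v ∈ S.filter (fun v => Nat.gcd v q = d),
          (Nat.gcd v q : ℝ) ^ s / (v : ℝ) ^ s :=
        (Finset.sum_fiberwise_of_maps_to hmaps _).symm
    _ ≤ ∑ d ∈ q.divisors, Z := Finset.sum_le_sum inner
    _ = (q.divisors.card : ℝ) * Z := by rw [Finset.sum_const, nsmul_eq_mul]
    _ ≤ (C₀ * (q:ℝ) ^ ε) * Z := by
        refine mul_le_mul_of_nonneg_right (hdiv q hq) hZ0
    _ ≤ C₀ * (Z + 1) * (q:ℝ) ^ ε := by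
        have hqε : (0:ℝ) ≤ (q:ℝ) ^ ε := Real.rpow_nonneg (Nat.cast_nonneg q) _
        nlinarith
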